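/- For every integer k ≥ 1 and every integer n ≥ k+1, the k-th powers of the Fibonacci polynomials satisfy the recurrence ∑_{j=0}^{k+1} (−1)^{binom(j+1,2)} · s^{binom(j,2)} · ⟨k+1, j⟩(x,s) · F_{n−j}(x,s)^k = 0 in the field ℚ(x,s). -/

import Mathlib

set_option synthInstance.maxHeartbeats 1000000
set_option maxHeartbeats 1000000


open Finset

/-- The Fibonacci polynomials `F n` in two variables `x = X 0`, `s = X 1`, defined by
`F 0 = 0`, `F 1 = 1`, `F (n+2) = x * F (n+1) + s * F n`. -/
noncomputable def fibPoly : ℕ → MvPolynomial (Fin 2) ℚ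
  | 0 => 0
  | 1 => 1
  | n + 2 => MvPolynomial.X 0 * fibPoly (n + 1) + MvPolynomial.X 1 * fibPoly n

/-- The field ℚ(x,s) of rational functions in two variables over ℚ. -/
noncomputable abbrev RatField : Type := FractionRing (MvPolynomial (Fin 2) ℚ)

/-- The Fibonacci polynomials viewed in ℚ(x,s). -/
noncomputable def fibF (n : ℕ) : RatField :=
  algebraMap (MvPolynomial (Fin 2) ℚ) RatField (fibPoly n)

/-- The variable `s` viewed in ℚ(x,s). -/
noncomputable def sVar : RatField :=
  algebraMap (MvPolynomial (Fin 2) ℚ) RatField (MvPolynomial.X 1)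

/-- The fibonomial coefficient `⟨n, k⟩(x,s) = (∏_{i=0}^{k-1} F_{n-i}) / (∏_{i=1}^{k} F_i)`. -/
noncomputable def fibonomial (n k : ℕ) : RatField :=
  (∏ i ∈ Finset.range k, fibF (n - i)) / (∏ i ∈ Finset.range k, fibF (i + 1))

namespace FibAux

noncomputable def xVar : RatField :=
  algebraMap (MvPolynomial (Fin 2) ℚ) RatField (MvPolynomial.X 0)

lemma fibF_zero : fibF 0 = 0 := by simp [fibF, fibPoly]
lemma fibF_one : fibF 1 = 1 := by simp [fibF, fibPoly]
lemma fibF_rec (n : ℕ) : fibF (n + 2) = xVar * fibF (n + 1) + sVar * fibF n := by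
  simp [fibF, fibPoly, xVar, sVar, map_add, map_mul]

lemma evalOne_fibPoly (n : ℕ) :
    MvPolynomial.eval (fun _ => (1 : ℚ)) (fibPoly n) = Nat.fib n := by
  induction n using Nat.twoStepInduction with
  | zero => simp [fibPoly]
  | one => simp [fibPoly]
  | more n ih1 ih2 =>
    simp only [fibPoly, map_add, map_mul, MvPolynomial.eval_X, ih1, ih2, one_mul,
      Nat.fib_add_two]
    push_cast
    ring

lemma fibPoly_ne_zero {n : ℕ} (h : 1 ≤ n) : fibPoly n ≠ 0 := by
  intro h0
  have := evalOne_fibPoly n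
  rw [h0, map_zero] at this
  have hp := Nat.fib_pos.mpr h
  exact_mod_cast absurd this.symm (by positivity)

lemma fibF_ne_zero {n : ℕ} (h : 1 ≤ n) : fibF n ≠ 0 := by
  simp only [fibF, ne_eq, IsFractionRing.to_map_eq_zero_iff]
  exact fibPoly_ne_zero h

lemma sVar_ne_zero : sVar ≠ 0 := by
  simp only [sVar, ne_eq, IsFractionRing.to_map_eq_zero_iff]
  exact MvPolynomial.X_ne_zero 1

end FibAux

namespace FibAux
open Polynomial

noncomputable def q : Polynomial RatField := X ^ 2 - (C xVar * X + C sVar)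

lemma q_degree : q.degree = 2 := by
  unfold q
  have h2 : (X ^ 2 : Polynomial RatField).degree = 2 := by
    simpa using degree_X_pow 2
  rw [degree_sub_eq_left_of_degree_lt]
  · exact h2
  · rw [h2]
    refine lt_of_le_of_lt (degree_add_le _ _) ?_
    refine max_lt ?_ ?_
    · exact lt_of_le_of_lt (degree_C_mul_X_le _) (by norm_num)
    · exact lt_of_le_of_lt (degree_C_le) (by norm_num)

noncomputable abbrev K : Type := AdjoinRoot q

noncomputable def φ : RatField →+* K := AdjoinRoot.of q

lemma φ_inj : Function.Injective φ :=
  AdjoinRoot.of.injective_of_degree_ne_zero (by rw [q_degree]; norm_num)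

noncomputable def a : K := AdjoinRoot.root q
noncomputable def b : K := φ xVar - a

lemma ha : a ^ 2 = φ xVar * a + φ sVar := by
  have h : (AdjoinRoot.mk q) (X ^ 2 - (C xVar * X + C sVar)) = 0 := AdjoinRoot.mk_self
  simp only [map_sub, map_add, map_mul, map_pow, AdjoinRoot.mk_X, AdjoinRoot.mk_C] at h
  unfold a φ
  linear_combination h

lemma hab_add : a + b = φ xVar := by simp [b]
lemma hab_mul : a * b = -φ sVar := by
  simp only [b]
  linear_combination -ha

lemma binet (m : ℕ) : (a - b) * φ (fibF m) = a ^ m - b ^ m := by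
  induction m using Nat.twoStepInduction with
  | zero => simp [fibF_zero]
  | one => simp [fibF_one]
  | more m ih1 ih2 =>
    rw [fibF_rec, map_add, map_mul, map_mul]
    have hx : φ xVar = a + b := hab_add.symm
    have hs : φ sVar = -(a * b) := by rw [hab_mul]; ring
    rw [hx, hs, mul_add, ← mul_assoc, ← mul_assoc, mul_comm (a-b) (a+b), mul_comm (a-b) (-(a*b)),
      mul_assoc, mul_assoc, ih1, ih2]
    ring

lemma delta_sq : (a - b) ^ 2 = φ (xVar ^ 2 + 4 * sVar) := by
  have hx : φ xVar = a + b := hab_add.symm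
  have hs : φ sVar = -(a * b) := by rw [hab_mul]; ring
  rw [map_add, map_mul, map_pow, hx, hs]
  rw [map_ofNat]
  ring

lemma disc_ne_zero : (xVar ^ 2 + 4 * sVar : RatField) ≠ 0 := by
  have : (xVar ^ 2 + 4 * sVar : RatField)
      = algebraMap (MvPolynomial (Fin 2) ℚ) RatField
        (MvPolynomial.X 0 ^ 2 + 4 * MvPolynomial.X 1) := by
    simp [xVar, sVar, map_add, map_mul, map_pow, map_ofNat]
  rw [this, ne_eq, IsFractionRing.to_map_eq_zero_iff]
  intro h0
  have := congrArg (MvPolynomial.eval (fun i : Fin 2 => if i = 0 then (0:ℚ) else 1)) h0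
  simp at this

lemma unit_of_ne_zero {x : RatField} (hx : x ≠ 0) : IsUnit (φ x) :=
  (IsUnit.mk0 x hx).map φ

lemma delta_unit : IsUnit (a - b) := by
  have : IsUnit ((a - b) * (a - b)) := by
    rw [← sq, delta_sq]; exact unit_of_ne_zero disc_ne_zero
  exact isUnit_of_mul_isUnit_left this

end FibAux

namespace FibAux

noncomputable def σ (j : ℕ) : RatField := (-1) ^ ((j + 1).choose 2) * sVar ^ j.choose 2

noncomputable def c (m j : ℕ) : RatField := σ j * fibonomial m j

lemma σ_ne_zero (j : ℕ) : σ j ≠ 0 := by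
  apply mul_ne_zero
  · exact pow_ne_zero _ (by norm_num)
  · exact pow_ne_zero _ sVar_ne_zero

lemma choose_two_succ (j : ℕ) : (j + 1).choose 2 = j.choose 2 + j := by
  have h : (j + 1).choose 2 = j.choose 1 + j.choose 2 := Nat.choose_succ_succ j 1
  rw [Nat.choose_one_right] at h
  omega

lemma σ_succ (j : ℕ) : σ (j + 1) = σ j * ((-1) ^ (j + 1) * sVar ^ j) := by
  unfold σ
  rw [choose_two_succ (j+1), choose_two_succ j, pow_add, pow_add]
  ring

lemma fibonomial_zero (m : ℕ) : fibonomial m 0 = 1 := by simp [fibonomial]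

lemma fibonomial_self (m : ℕ) : fibonomial m m = 1 := by
  unfold fibonomial
  rw [show (∏ i ∈ Finset.range m, fibF (m - i)) = ∏ i ∈ Finset.range m, fibF (i + 1) by
    rw [← Finset.prod_range_reflect]
    apply Finset.prod_congr rfl
    intro i hi
    simp only [Finset.mem_range] at hi
    congr 1
    omega]
  rw [div_self]
  exact Finset.prod_ne_zero_iff.mpr fun i _ => fibF_ne_zero (by omega)

lemma fibonomial_overflow (k : ℕ) : fibonomial (k + 1) (k + 2) = 0 := by
  unfold fibonomial
  rw [Finset.prod_eq_zero (Finset.self_mem_range_succ (k+1))]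
  · exact zero_div _
  · simp [fibF_zero]

lemma denom_ne_zero (j : ℕ) : (∏ i ∈ Finset.range j, fibF (i + 1)) ≠ 0 :=
  Finset.prod_ne_zero_iff.mpr fun i _ => fibF_ne_zero (by omega)

lemma fibonomial_ne_zero {m j : ℕ} (h : j ≤ m) : fibonomial m j ≠ 0 := by
  unfold fibonomial
  apply div_ne_zero _ (denom_ne_zero j)
  exact Finset.prod_ne_zero_iff.mpr fun i hi =>
    fibF_ne_zero (by simp only [Finset.mem_range] at hi; omega)

lemma fibo_rel1 (k j : ℕ) :
    fibonomial (k + 2) j * fibF (k + 2 - j) = fibF (k + 2) * fibonomial (k + 1) j := by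
  unfold fibonomial
  rw [div_mul_eq_mul_div, ← mul_div_assoc]
  congr 1
  have h1 : (∏ i ∈ Finset.range j, fibF (k + 2 - i)) * fibF (k + 2 - j)
      = ∏ i ∈ Finset.range (j + 1), fibF (k + 2 - i) := (Finset.prod_range_succ _ _).symm
  rw [h1, Finset.prod_range_succ' (fun i => fibF (k + 2 - i)) j]
  simp only [Nat.sub_zero]
  rw [mul_comm]
  congr 1
  apply Finset.prod_congr rfl
  intro i _
  congr 1
  omega

lemma fibo_rel2 (k j : ℕ) :
    fibonomial (k + 2) (j + 1) * fibF (j + 1) = fibF (k + 2) * fibonomial (k + 1) j := by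
  unfold fibonomial
  rw [Finset.prod_range_succ' (fun i => fibF (k + 2 - i)) j,
    Finset.prod_range_succ (fun i => fibF (i + 1)) j]
  simp only [Nat.sub_zero]
  rw [div_mul_eq_mul_div, mul_div_mul_right _ _ (fibF_ne_zero (by omega : 1 ≤ j + 1))]
  rw [mul_comm (∏ i ∈ Finset.range j, fibF (k + 2 - (i + 1))) (fibF (k+2)), mul_div_assoc]
  congr 2
  apply Finset.prod_congr rfl
  intro i _
  congr 1
  omega

end FibAux

namespace FibAux

lemma hs' : φ sVar = -(a * b) := by rw [hab_mul]; ring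

lemma σ_succ' (j : ℕ) : σ (j + 1) = -(σ j * (-sVar) ^ j) := by
  rw [σ_succ, neg_pow]
  ring

lemma φσ_succ (j : ℕ) : φ (σ (j + 1)) = -(φ (σ j) * (a * b) ^ j) := by
  rw [σ_succ', map_neg, map_mul, map_pow, map_neg, hs', neg_neg]

/-- The middle case of the coefficient recurrence. -/
lemma coeff_mid (j' m' : ℕ) :
    φ (c (j' + m' + 2) (j' + 1)) =
      b ^ (j' + 1) * φ (c (j' + m' + 1) (j' + 1)) -
        a ^ (j' + m' + 1) * b ^ j' * φ (c (j' + m' + 1) j') := by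
  have h1 := fibo_rel1 (j' + m') (j' + 1)
  have h2 := fibo_rel2 (j' + m') j'
  have hsub : j' + m' + 2 - (j' + 1) = m' + 1 := by omega
  rw [hsub] at h1
  have h1' := congrArg φ h1
  have h2' := congrArg φ h2
  rw [map_mul, map_mul] at h1' h2'
  have hb1 := binet (j' + m' + 2)
  have hb2 := binet (m' + 1)
  have hb3 := binet (j' + 1)
  have hu : IsUnit ((a - b) * φ (fibF (j' + m' + 2))) :=
    delta_unit.mul (unit_of_ne_zero (fibF_ne_zero (by omega)))
  simp only [c, map_mul, φσ_succ]
  apply hu.mul_left_cancel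
  linear_combination
    (-(a - b) * b ^ (j' + 1) * φ (σ j') * (a * b) ^ j') * h1' +
    (-(a - b) * a ^ (j' + m' + 1) * b ^ j' * φ (σ j')) * h2' +
    (-(φ (σ j') * (a * b) ^ j' * φ (fibonomial (j' + m' + 2) (j' + 1)))) * hb1 +
    (b ^ (j' + 1) * φ (σ j') * (a * b) ^ j' * φ (fibonomial (j' + m' + 2) (j' + 1))) * hb2 +
    (a ^ (j' + m' + 1) * b ^ j' * φ (σ j') * φ (fibonomial (j' + m' + 2) (j' + 1))) * hb3

end FibAux

namespace FibAux

lemma c_zero (m : ℕ) : c m 0 = 1 := by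
  have h1 : Nat.choose 1 2 = 0 := by decide
  have h0 : Nat.choose 0 2 = 0 := by decide
  simp [c, σ, fibonomial_zero, h1, h0]

lemma coeff_all (k : ℕ) : ∀ j < k + 3,
    φ (c (k + 2) j) = b ^ j * φ (c (k + 1) j) -
      (if j = 0 then 0 else a ^ (k + 1) * b ^ (j - 1) * φ (c (k + 1) (j - 1))) := by
  intro j hj
  match j with
  | 0 => simp [c_zero]
  | (j'' + 1) =>
    rw [if_neg (by omega)]
    simp only [Nat.add_sub_cancel]
    rcases Nat.lt_or_ge j'' (k + 1) with h | h
    · obtain ⟨m', rfl⟩ : ∃ m', k = j'' + m' := ⟨k - j'', by omega⟩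
      exact coeff_mid j'' m'
    · have hj2 : j'' = k + 1 := by omega
      subst hj2
      have h0 : c (k + 1) (k + 2) = 0 := by rw [c, fibonomial_overflow, mul_zero]
      have h1 : c (k + 2) (k + 2) = σ (k + 2) := by rw [c, fibonomial_self, mul_one]
      have h2 : c (k + 1) (k + 1) = σ (k + 1) := by rw [c, fibonomial_self, mul_one]
      rw [h0, map_zero, mul_zero, zero_sub, h1, h2, φσ_succ (k + 1), mul_pow]
      ring

lemma σ_one : σ 1 = -1 := by
  have h1 : Nat.choose 2 2 = 1 := by decide
  have h0 : Nat.choose 1 2 = 0 := by decide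
  simp [σ, h1, h0]

lemma c_one_one : c 1 1 = -1 := by rw [c, fibonomial_self, mul_one, σ_one]

lemma key (k : ℕ) : ∀ T U : K,
    ∑ j ∈ Finset.range (k + 2), φ (c (k + 1) j) * U ^ j * T ^ (k + 1 - j)
      = ∏ m ∈ Finset.range (k + 1), (T - a ^ (k - m) * b ^ m * U) := by
  induction k with
  | zero =>
    intro T U
    rw [Finset.sum_range_succ, Finset.sum_range_one, Finset.prod_range_one]
    rw [c_zero, c_one_one, map_one, map_neg, map_one]
    simp only [pow_zero, pow_one, Nat.sub_zero, Nat.sub_self]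
    ring
  | succ k ih =>
    intro T U
    have hsplit :
        (∏ m ∈ Finset.range (k + 2), (T - a ^ (k + 1 - m) * b ^ m * U))
          = (∑ j ∈ Finset.range (k + 2), φ (c (k + 1) j) * (b * U) ^ j * T ^ (k + 1 - j)) *
              (T - a ^ (k + 1) * U) := by
      rw [Finset.prod_range_succ' (fun m => T - a ^ (k + 1 - m) * b ^ m * U) (k + 1)]
      congr 1
      · rw [ih T (b * U)]
        apply Finset.prod_congr rfl
        intro m hm
        have h1 : k + 1 - (m + 1) = k - m := by omega
        rw [h1]
        ring
      · simp
    rw [hsplit, mul_sub, Finset.sum_mul, Finset.sum_mul]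
    -- LHS: split coefficients
    have hL : ∑ j ∈ Finset.range (k + 3), φ (c (k + 2) j) * U ^ j * T ^ (k + 2 - j)
        = ∑ j ∈ Finset.range (k + 3),
            ((b ^ j * φ (c (k + 1) j)) * U ^ j * T ^ (k + 2 - j) -
              (if j = 0 then 0 else a ^ (k + 1) * b ^ (j - 1) * φ (c (k + 1) (j - 1)))
                * U ^ j * T ^ (k + 2 - j)) := by
      apply Finset.sum_congr rfl
      intro j hj
      rw [Finset.mem_range] at hj
      rw [coeff_all k j hj]
      ring
    rw [hL, Finset.sum_sub_distrib]
    congr 1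
    · -- first sums
      rw [Finset.sum_range_succ]
      have hz : c (k + 1) (k + 2) = 0 := by rw [c, fibonomial_overflow, mul_zero]
      rw [hz, map_zero, mul_zero, zero_mul, zero_mul, add_zero]
      apply Finset.sum_congr rfl
      intro j hj
      rw [Finset.mem_range] at hj
      have h1 : k + 2 - j = (k + 1 - j) + 1 := by omega
      rw [h1, pow_succ, mul_pow]
      ring
    · -- second sums
      rw [Finset.sum_range_succ' (fun j =>
        (if j = 0 then 0 else a ^ (k + 1) * b ^ (j - 1) * φ (c (k + 1) (j - 1)))
          * U ^ j * T ^ (k + 2 - j)) (k + 2)]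
      simp only [eq_self_iff_true, if_true, zero_mul, add_zero]
      apply Finset.sum_congr rfl
      intro j hj
      rw [Finset.mem_range] at hj
      rw [if_neg (by omega : ¬ j + 1 = 0)]
      simp only [Nat.add_sub_cancel]
      have h1 : k + 2 - (j + 1) = k + 1 - j := by omega
      rw [h1, mul_pow, pow_succ]
      ring

end FibAux

namespace FibAux

lemma main (k n : ℕ) (hk : 1 ≤ k) (hn : k + 1 ≤ n) :
    ∑ j ∈ Finset.range (k + 2), c (k + 1) j * fibF (n - j) ^ k = 0 := by
  apply φ_inj
  rw [map_zero, map_sum]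
  have hu : IsUnit ((a - b) ^ k) := delta_unit.pow k
  apply hu.mul_left_cancel
  rw [mul_zero, Finset.mul_sum]
  calc
    ∑ j ∈ Finset.range (k + 2), (a - b) ^ k * φ (c (k + 1) j * fibF (n - j) ^ k)
      = ∑ j ∈ Finset.range (k + 2),
          φ (c (k + 1) j) * ((a - b) * φ (fibF (n - j))) ^ k := by
        apply Finset.sum_congr rfl
        intro j _
        rw [map_mul, map_pow, mul_pow]
        ring
    _ = ∑ j ∈ Finset.range (k + 2), φ (c (k + 1) j) * (a ^ (n - j) - b ^ (n - j)) ^ k := by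
        apply Finset.sum_congr rfl
        intro j _
        rw [binet]
    _ = ∑ j ∈ Finset.range (k + 2), ∑ i ∈ Finset.range (k + 1),
          ((-1) ^ (i + k) * (k.choose i : K) * (a ^ i * b ^ (k - i)) ^ (n - k - 1)) *
            (φ (c (k + 1) j) * (a ^ i * b ^ (k - i)) ^ (k + 1 - j)) := by
        apply Finset.sum_congr rfl
        intro j hj
        rw [Finset.mem_range] at hj
        rw [sub_pow, Finset.mul_sum]
        apply Finset.sum_congr rfl
        intro i hi
        rw [Finset.mem_range] at hi
        have e1 : (a ^ (n - j)) ^ i = (a ^ i) ^ (n - j) := by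
          rw [← pow_mul, ← pow_mul, Nat.mul_comm]
        have e2 : (b ^ (n - j)) ^ (k - i) = (b ^ (k - i)) ^ (n - j) := by
          rw [← pow_mul, ← pow_mul, Nat.mul_comm]
        have e3 : (a ^ i) ^ (n - j) * (b ^ (k - i)) ^ (n - j)
            = (a ^ i * b ^ (k - i)) ^ (n - j) := (mul_pow _ _ _).symm
        have e4 : n - j = (n - k - 1) + (k + 1 - j) := by omega
        rw [e1, e2]
        calc φ (c (k + 1) j) *
              ((-1) ^ (i + k) * (a ^ i) ^ (n - j) * (b ^ (k - i)) ^ (n - j) * (k.choose i : K))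
            = φ (c (k + 1) j) *
              ((-1) ^ (i + k) * ((a ^ i * b ^ (k - i)) ^ (n - j)) * (k.choose i : K)) := by
              rw [← e3]; ring
          _ = _ := by
              rw [e4, pow_add]
              ring
    _ = ∑ i ∈ Finset.range (k + 1),
          ((-1) ^ (i + k) * (k.choose i : K) * (a ^ i * b ^ (k - i)) ^ (n - k - 1)) *
            (∑ j ∈ Finset.range (k + 2),
              φ (c (k + 1) j) * (a ^ i * b ^ (k - i)) ^ (k + 1 - j)) := by
        rw [Finset.sum_comm]
        apply Finset.sum_congr rfl
        intro i _
        rw [Finset.mul_sum]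
    _ = 0 := by
        apply Finset.sum_eq_zero
        intro i hi
        rw [Finset.mem_range] at hi
        have hinner : ∑ j ∈ Finset.range (k + 2),
            φ (c (k + 1) j) * (a ^ i * b ^ (k - i)) ^ (k + 1 - j) = 0 := by
          have hkey := key k (a ^ i * b ^ (k - i)) 1
          simp only [one_pow, mul_one] at hkey
          rw [hkey]
          apply Finset.prod_eq_zero (Finset.mem_range.mpr (by omega : k - i < k + 1))
          have : k - (k - i) = i := by omega
          rw [this, sub_eq_zero]
        rw [hinner, mul_zero]

end FibAux

theorem fibPoly_pow_recurrence (k n : ℕ) (hk : 1 ≤ k) (hn : k + 1 ≤ n) :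
    ∑ j ∈ Finset.range (k + 2),
      (-1 : RatField) ^ ((j + 1).choose 2) * sVar ^ (j.choose 2) *
        fibonomial (k + 1) j * fibF (n - j) ^ k = 0 := by
  have h := FibAux.main k n hk hn
  calc ∑ j ∈ Finset.range (k + 2),
      (-1 : RatField) ^ ((j + 1).choose 2) * sVar ^ (j.choose 2) *
        fibonomial (k + 1) j * fibF (n - j) ^ k
      = ∑ j ∈ Finset.range (k + 2), FibAux.c (k + 1) j * fibF (n - j) ^ k := by
        apply Finset.sum_congr rfl
        intro j _
        rw [FibAux.c, FibAux.σ]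
    _ = 0 := h
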